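/- For every m and n there exists a (0,1)-BAPO solving Match2_n over (Z_m)^n: the attention function selects a prefix element x_i with x_n + x_i ≡ 0 (mod m) whenever x_n is known from the suffix, and no prefix-oracle output is needed. -/

import Mathlib

open Finset Filter Asymptotics

/-- An `(a, b)`-BAPO (bounded attention prefix oracle): a prefix oracle `f` outputting
`a` bits, a binary attention function `g`, and a suffix oracle `h` that receives the
prefix-oracle output, an attended set of at most `b` (token, 1-based index) pairs from
the prefix, the suffix, and the split index. -/
structure BAPO (Sigma : Type) (Out : Type) (a b : ℕ) where
  f : List Sigma → (Fin a → Bool)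
  g : List Sigma → ℕ → Sigma → ℕ → Bool
  h : (Fin a → Bool) → Finset (Sigma × ℕ) → List Sigma → ℕ → Out

namespace BAPO

variable {Sigma Out : Type} {a b : ℕ}

/-- The set `𝔾 = {(xᵢ, i) : 1 ≤ i ≤ k, g(suffix, k, xᵢ, i) = 1}` of attended
candidates for a given prefix and suffix. -/
noncomputable def cands (M : BAPO Sigma Out a b) (pre suf : List Sigma) :
    Finset (Sigma × ℕ) :=
  letI := Classical.decEq Sigma
  (Finset.univ.filter fun i : Fin pre.length =>
      M.g suf pre.length (pre.get i) ((i : ℕ) + 1) = true).image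
    fun i => (pre.get i, (i : ℕ) + 1)

/-- The BAPO outputs `y` on input `x`: for every split index `k < |x|` and every
attended set `G ⊆ 𝔾` with `|G| = min b |𝔾|`, the suffix oracle outputs `y`. -/
def SolvesOn (M : BAPO Sigma Out a b) (x : List Sigma) (y : Out) : Prop :=
  ∀ k, k < x.length →
    ∀ G : Finset (Sigma × ℕ), G ⊆ M.cands (x.take k) (x.drop k) →
      G.card = min b (M.cands (x.take k) (x.drop k)).card →
      M.h (M.f (x.take k)) G (x.drop k) k = y

/-- The BAPO outputs a *correct* answer (one satisfying `good`) on input `x`: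
for every split index `k < |x|` and every attended set `G ⊆ 𝔾` with
`|G| = min b |𝔾|`, the suffix oracle's output satisfies `good`. -/
def SolvesOnP (M : BAPO Sigma Out a b) (x : List Sigma) (good : Out → Prop) : Prop :=
  ∀ k, k < x.length →
    ∀ G : Finset (Sigma × ℕ), G ⊆ M.cands (x.take k) (x.drop k) →
      G.card = min b (M.cands (x.take k) (x.drop k)).card →
      good (M.h (M.f (x.take k)) G (x.drop k) k)

end BAPO

/-- **Match2ₙ is BAPO-easy.** For every modulus `m` and every `n`, there exists a
`(0, 1)`-BAPO solving `Match2` on inputs `x ∈ (ℤ/m)^{n+1}`: it outputs whether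
there exists an index `i` with `x_last + x_i ≡ 0 (mod m)`. No prefix-oracle
output is needed and one attended token suffices. -/
theorem match2_has_zero_one_BAPO (m n : ℕ) :
    ∃ M : BAPO (ZMod m) Bool 0 1,
      ∀ x : Fin (n + 1) → ZMod m,
        M.SolvesOn (List.ofFn x)
          (decide (∃ i : Fin (n + 1), x (Fin.last n) + x i = 0)) := by
  classical
  let M : BAPO (ZMod m) Bool 0 1 :=
    { f := fun _ i => i.elim0
      g := fun suf _ σ _ => decide (suf.getLastD 0 + σ = 0)
      h := fun _ G suf _ => decide (G.Nonempty ∨ ∃ σ ∈ suf, suf.getLastD 0 + σ = 0) }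
  refine ⟨M, ?_⟩
  intro x k hk G hG hcard
  simp only [List.length_ofFn] at hk
  set L := List.ofFn x with hL
  have hdropne : L.drop k ≠ [] := by
    simp [hL, List.drop_eq_nil_iff]
    omega
  have hlast : (L.drop k).getLastD 0 = x (Fin.last n) := by
    rw [List.getLastD_eq_getLast?, List.getLast?_drop, if_neg (by simp [hL]; omega)]
    rw [List.getLast?_eq_getLast (by simp [hL] : L ≠ [])]
    simp only [hL, Option.getD_some]
    exact List.getLast_ofFn_succ x
  have hlen : (L.take k).length = k := by simp [hL]; omega
  have hget : ∀ i : Fin (L.take k).length, (L.take k).get i = x ⟨i, by omega⟩ := by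
    intro i
    rw [List.get_eq_getElem, List.getElem_take]
    simp only [hL, List.getElem_ofFn]
  have hCne : (M.cands (L.take k) (L.drop k)).Nonempty ↔
      ∃ i : Fin (n + 1), (i : ℕ) < k ∧ x (Fin.last n) + x i = 0 := by
    simp only [BAPO.cands, M, Finset.image_nonempty, Finset.filter_nonempty_iff,
      Finset.mem_univ, true_and, decide_eq_true_eq, hlast]
    constructor
    · rintro ⟨i, hi⟩
      have hik : (i : ℕ) < k := by have := i.isLt; omega
      exact ⟨⟨i, by omega⟩, hik, by rw [← hget i]; exact hi⟩
    · rintro ⟨i, hik, hi⟩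
      refine ⟨⟨i, by omega⟩, ?_⟩
      rw [hget ⟨i, by omega⟩]
      simpa using hi
  have hGne : G.Nonempty ↔ (M.cands (L.take k) (L.drop k)).Nonempty := by
    constructor
    · rintro ⟨p, hp⟩; exact ⟨p, hG hp⟩
    · rintro ⟨p, hp⟩
      rw [← Finset.card_pos, hcard]
      have : 0 < (M.cands (L.take k) (L.drop k)).card := Finset.card_pos.2 ⟨p, hp⟩
      omega
  have hmem : ∀ σ, σ ∈ L.drop k ↔ ∃ i : Fin (n + 1), k ≤ (i : ℕ) ∧ x i = σ := by
    intro σ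
    constructor
    · intro hσ
      obtain ⟨j, hj, hjσ⟩ := List.getElem_of_mem hσ
      have hjlen : k + j < n + 1 := by
        have := hj; simp [hL] at this; omega
      rw [List.getElem_drop] at hjσ
      exact ⟨⟨k + j, hjlen⟩, by simp, by rw [← hjσ]; simp only [hL, List.getElem_ofFn]⟩
    · rintro ⟨i, hki, hiσ⟩
      have hidx : (i : ℕ) - k < (L.drop k).length := by simp [hL]; omega
      have hval : (L.drop k)[(i : ℕ) - k] = σ := by
        rw [List.getElem_drop, ← hiσ]
        simp only [hL, List.getElem_ofFn]
        exact congrArg x (Fin.ext (by simp; omega))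
      rw [← hval]
      exact List.getElem_mem hidx
  show decide (G.Nonempty ∨ ∃ σ ∈ L.drop k, (L.drop k).getLastD 0 + σ = 0) = _
  rw [decide_eq_decide, hlast, hGne, hCne]
  constructor
  · rintro (⟨i, _, hi⟩ | ⟨σ, hσ, hmatch⟩)
    · exact ⟨i, hi⟩
    · obtain ⟨i, _, rfl⟩ := (hmem σ).1 hσ
      exact ⟨i, hmatch⟩
  · rintro ⟨i, hi⟩
    by_cases hik : (i : ℕ) < k
    · exact Or.inl ⟨i, hik, hi⟩
    · exact Or.inr ⟨x i, (hmem (x i)).2 ⟨i, by omega, rfl⟩, hi⟩
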